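/- arXiv:2501.04898 — 2 statements merged into one kernel-verified Lean document; each statement's English description precedes it below -/
import Mathlib

section
/- Let r ≥ 0 be an integer, let σ(x) = 1/(1+e^{-x}) be the sigmoid function, and for B > 0 let δ_B(x) = σ(Bx) − σ(B(x−1)). There exists a constant C > 0 depending only on r such that for every B ≥ 1 and every integer 0 ≤ j ≤ r, sup_{x ∈ [0,1]} | (d^j/dx^j)[ δ_B(x+1) + δ_B(x) + δ_B(x−1) − 1 ] | ≤ C · B^r · e^{−B}. -/
open Real MeasureTheory
open Polynomial

/-- The sigmoid function `σ(x) = 1/(1+e^{-x})`. -/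
noncomputable def sigmoid (x : ℝ) : ℝ := 1 / (1 + Real.exp (-x))

/-- `δ_B(x) = σ(Bx) - σ(B(x-1))`, a smooth approximation of the indicator of `[0,1)`. -/
noncomputable def deltaB (B x : ℝ) : ℝ := _root_.sigmoid (B * x) - _root_.sigmoid (B * (x - 1))

lemma sig_hasDerivAt (x : ℝ) :
    HasDerivAt _root_.sigmoid (_root_.sigmoid x * (1 - _root_.sigmoid x)) x := by
  have hne : (1 : ℝ) + Real.exp (-x) ≠ 0 := by positivity
  have h1 : HasDerivAt (fun x : ℝ => 1 + Real.exp (-x)) (-Real.exp (-x)) x := by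
    simpa using (((Real.hasDerivAt_exp (-x)).comp x ((hasDerivAt_id x).neg)).const_add 1)
  have h2 := h1.inv hne
  have : _root_.sigmoid x * (1 - _root_.sigmoid x) = -(-Real.exp (-x)) / (1 + Real.exp (-x)) ^ 2 := by
    unfold _root_.sigmoid; field_simp; ring
  rw [this]
  have : _root_.sigmoid = fun x : ℝ => (1 + Real.exp (-x))⁻¹ := by
    funext t; unfold _root_.sigmoid; rw [one_div]
  rw [this]
  exact h2

lemma sig_contDiff : ContDiff ℝ ⊤ _root_.sigmoid := by
  apply ContDiff.div contDiff_const
  · exact contDiff_const.add (Real.contDiff_exp.comp contDiff_neg)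
  · intro x; positivity

lemma sig_nonneg (x : ℝ) : 0 ≤ _root_.sigmoid x := by unfold _root_.sigmoid; positivity

lemma sig_le_one (x : ℝ) : _root_.sigmoid x ≤ 1 := by
  unfold _root_.sigmoid
  rw [div_le_one (by positivity)]
  nlinarith [Real.exp_pos (-x)]

lemma sig_le_exp (x : ℝ) : _root_.sigmoid x ≤ Real.exp x := by
  unfold _root_.sigmoid
  rw [div_le_iff₀ (by positivity)]
  have hprod : Real.exp x * Real.exp (-x) = 1 := by rw [← Real.exp_add]; simp
  nlinarith [Real.exp_pos x, Real.exp_pos (-x)]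

/-- iterated derivatives of _root_.sigmoid are polynomials in _root_.sigmoid with zero constant term -/
lemma sig_iteratedDeriv (j : ℕ) :
    ∃ p : Polynomial ℝ, p.coeff 0 = 0 ∧
      ∀ t : ℝ, iteratedDeriv j _root_.sigmoid t = p.eval (_root_.sigmoid t) := by
  induction j with
  | zero => exact ⟨X, coeff_X_zero, fun t => by simp⟩
  | succ j ih =>
    obtain ⟨p, hp0, hp⟩ := ih
    refine ⟨p.derivative * (X - X ^ 2), by simp [coeff_zero_eq_eval_zero], fun t => ?_⟩
    rw [iteratedDeriv_succ]
    have he : iteratedDeriv j _root_.sigmoid = fun t => p.eval (_root_.sigmoid t) := funext hp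
    rw [he]
    have hd : HasDerivAt (fun t => p.eval (_root_.sigmoid t))
        (p.derivative.eval (_root_.sigmoid t) * (_root_.sigmoid t * (1 - _root_.sigmoid t))) t :=
      (p.hasDerivAt (_root_.sigmoid t)).comp t (sig_hasDerivAt t)
    rw [hd.deriv]
    simp only [eval_mul, eval_sub, eval_X, eval_pow]
    ring

lemma sig_iteratedDeriv_bound (j : ℕ) :
    ∃ M > (0:ℝ), ∀ t : ℝ, t ≤ 0 → |iteratedDeriv j _root_.sigmoid t| ≤ M * Real.exp t := by
  obtain ⟨p, hp0, hp⟩ := sig_iteratedDeriv j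
  obtain ⟨q, hq⟩ : X ∣ p := (X_dvd_iff).2 hp0
  set M : ℝ := (∑ i ∈ Finset.range (q.natDegree + 1), |q.coeff i|) + 1 with hM
  have hMpos : 0 < M := by
    have : (0:ℝ) ≤ ∑ i ∈ Finset.range (q.natDegree + 1), |q.coeff i| :=
      Finset.sum_nonneg fun i _ => abs_nonneg _
    linarith
  refine ⟨M, hMpos, fun t ht => ?_⟩
  rw [hp t, hq]
  have hs0 := sig_nonneg t
  have hs1 := sig_le_one t
  have hqb : |q.eval (_root_.sigmoid t)| ≤ M - 1 := by
    rw [eval_eq_sum_range]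
    refine (Finset.abs_sum_le_sum_abs _ _).trans ?_
    simp only [hM, add_sub_cancel_right]
    refine Finset.sum_le_sum fun i _ => ?_
    rw [abs_mul]
    calc |q.coeff i| * |_root_.sigmoid t ^ i| ≤ |q.coeff i| * 1 := by
          refine mul_le_mul_of_nonneg_left ?_ (abs_nonneg _)
          rw [abs_pow, abs_of_nonneg hs0]
          exact pow_le_one₀ hs0 hs1
      _ = |q.coeff i| := mul_one _
  have : |(X * q).eval (_root_.sigmoid t)| = _root_.sigmoid t * |q.eval (_root_.sigmoid t)| := by
    rw [eval_mul, eval_X, abs_mul, abs_of_nonneg hs0]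
  rw [this]
  calc _root_.sigmoid t * |q.eval (_root_.sigmoid t)| ≤ Real.exp t * M := by
        apply mul_le_mul (sig_le_exp t) (by linarith) (abs_nonneg _) (Real.exp_pos t).le
    _ = M * Real.exp t := mul_comm _ _

lemma key_identity (B y : ℝ) :
    deltaB B (y + 1) + deltaB B y + deltaB B (y - 1) - 1
      = -(_root_.sigmoid ((-B) * (y + 1))) + -(_root_.sigmoid (B * (y + (-2)))) := by
  have h1 : B * ((y + 1) - 1) = B * y := by ring
  have h2 : B * ((y - 1) - 1) = B * (y + (-2)) := by ring
  have h3 : (-B) * (y + 1) = -(B * (y + 1)) := by ring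
  simp only [deltaB, h1, h2, h3]
  have hsum : ∀ u : ℝ, _root_.sigmoid u + _root_.sigmoid (-u) = 1 := by
    intro u
    unfold _root_.sigmoid
    rw [neg_neg]
    have h1 : (1:ℝ) + Real.exp (-u) ≠ 0 := by positivity
    have h2 : (1:ℝ) + Real.exp u ≠ 0 := by positivity
    have hprod : Real.exp u * Real.exp (-u) = 1 := by rw [← Real.exp_add]; simp
    field_simp
    nlinarith [Real.exp_pos u, Real.exp_pos (-u)]
  have := hsum (B * (y + 1))
  linarith

lemma sig_affine_contDiff (c d : ℝ) : ContDiff ℝ ⊤ (fun y : ℝ => _root_.sigmoid (c * (y + d))) :=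
  sig_contDiff.comp ((contDiff_id.add contDiff_const).const_smul c)

lemma iter_affine (j : ℕ) (c d x : ℝ) :
    iteratedDeriv j (fun y => _root_.sigmoid (c * (y + d))) x
      = c ^ j * iteratedDeriv j _root_.sigmoid (c * (x + d)) := by
  have h1 := iteratedDeriv_comp_add_const j (fun z => _root_.sigmoid (c * z)) d
  have h2 := iteratedDeriv_comp_const_mul (f := _root_.sigmoid) (n := j) (sig_contDiff.of_le le_top) c
  calc iteratedDeriv j (fun y => _root_.sigmoid (c * (y + d))) x
      = iteratedDeriv j (fun z => _root_.sigmoid (c * z)) (x + d) := congrFun h1 x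
    _ = c ^ j * iteratedDeriv j _root_.sigmoid (c * (x + d)) := congrFun h2 (x + d)

lemma iter_add (j : ℕ) (f g : ℝ → ℝ) (hf : ContDiff ℝ ⊤ f) (hg : ContDiff ℝ ⊤ g) (x : ℝ) :
    iteratedDeriv j (fun y => f y + g y) x = iteratedDeriv j f x + iteratedDeriv j g x := by
  simp only [← iteratedDerivWithin_univ]
  exact iteratedDerivWithin_add (Set.mem_univ x) uniqueDiffOn_univ
    ((hf.contDiffOn.of_le le_top) x (Set.mem_univ x)) ((hg.contDiffOn.of_le le_top) x (Set.mem_univ x))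


/-- smooth decay of the sum of three neighboring translates of `δ_B` towards
the constant function `1` on `[0,1]`, with all derivatives up to order `r`. -/
theorem stmt0 (r : ℕ) :
    ∃ C > (0:ℝ), ∀ B : ℝ, 1 ≤ B → ∀ j : ℕ, j ≤ r → ∀ x ∈ Set.Icc (0:ℝ) 1,
      |iteratedDeriv j (fun y => deltaB B (y + 1) + deltaB B y + deltaB B (y - 1) - 1) x|
        ≤ C * B ^ r * Real.exp (-B) := by
  -- choose uniform bound M over j ≤ r
  have hch : ∀ j : ℕ, ∃ M > (0:ℝ), ∀ t : ℝ, t ≤ 0 → |iteratedDeriv j _root_.sigmoid t| ≤ M * Real.exp t :=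
    sig_iteratedDeriv_bound
  choose g hgpos hgb using hch
  set M : ℝ := ∑ i ∈ Finset.range (r + 1), g i with hMdef
  have hMpos : 0 < M := Finset.sum_pos (fun i _ => hgpos i) (by simp)
  have hgM : ∀ j ≤ r, g j ≤ M :=
    fun j hj => Finset.single_le_sum (fun i _ => (hgpos i).le) (Finset.mem_range.2 (Nat.lt_succ_of_le hj))
  refine ⟨2 * M, by linarith, fun B hB j hj x hx => ?_⟩
  obtain ⟨hx0, hx1⟩ := hx
  have hBpos : (0:ℝ) < B := lt_of_lt_of_le one_pos hB
  -- rewrite the function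
  have hfe : (fun y => deltaB B (y + 1) + deltaB B y + deltaB B (y - 1) - 1)
      = fun y => -(_root_.sigmoid ((-B) * (y + 1))) + -(_root_.sigmoid (B * (y + (-2)))) := funext (key_identity B)
  rw [hfe]
  have hc1 : ContDiff ℝ ⊤ (fun y : ℝ => -(_root_.sigmoid ((-B) * (y + 1)))) :=
    (sig_affine_contDiff (-B) 1).neg
  have hc2 : ContDiff ℝ ⊤ (fun y : ℝ => -(_root_.sigmoid (B * (y + (-2))))) :=
    (sig_affine_contDiff B (-2)).neg
  rw [iter_add j _ _ hc1 hc2 x, iteratedDeriv_fun_neg, iteratedDeriv_fun_neg, iter_affine, iter_affine]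
  have harg1 : (-B) * (x + 1) ≤ -B := by nlinarith
  have harg2 : B * (x + (-2)) ≤ -B := by nlinarith
  have hB0 : (-B : ℝ) ≤ 0 := by linarith
  have hb1 := hgb j ((-B) * (x + 1)) (harg1.trans hB0)
  have hb2 := hgb j (B * (x + (-2))) (harg2.trans hB0)
  have hexp1 : Real.exp ((-B) * (x + 1)) ≤ Real.exp (-B) := Real.exp_le_exp.2 harg1
  have hexp2 : Real.exp (B * (x + (-2))) ≤ Real.exp (-B) := Real.exp_le_exp.2 harg2
  have hBj : |(-B : ℝ)| ^ j ≤ B ^ r ∧ |B| ^ j ≤ B ^ r := by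
    rw [abs_neg, abs_of_pos hBpos]
    exact ⟨pow_le_pow_right₀ hB hj, pow_le_pow_right₀ hB hj⟩
  have hgMj := hgM j hj
  have e1 : |iteratedDeriv j _root_.sigmoid ((-B) * (x + 1))| ≤ M * Real.exp (-B) := by
    calc |iteratedDeriv j _root_.sigmoid ((-B) * (x + 1))| ≤ g j * Real.exp ((-B) * (x + 1)) := hb1
      _ ≤ M * Real.exp (-B) :=
        mul_le_mul hgMj hexp1 (Real.exp_pos _).le hMpos.le
  have e2 : |iteratedDeriv j _root_.sigmoid (B * (x + (-2)))| ≤ M * Real.exp (-B) := by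
    calc |iteratedDeriv j _root_.sigmoid (B * (x + (-2)))| ≤ g j * Real.exp (B * (x + (-2))) := hb2
      _ ≤ M * Real.exp (-B) := mul_le_mul hgMj hexp2 (Real.exp_pos _).le hMpos.le
  have hBr1 : (1:ℝ) ≤ B ^ r := one_le_pow₀ hB
  calc |-((-B) ^ j * iteratedDeriv j _root_.sigmoid ((-B) * (x + 1)))
          + -(B ^ j * iteratedDeriv j _root_.sigmoid (B * (x + (-2))))|
      ≤ |(-B) ^ j * iteratedDeriv j _root_.sigmoid ((-B) * (x + 1))|
        + |B ^ j * iteratedDeriv j _root_.sigmoid (B * (x + (-2)))| := by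
        refine le_trans (abs_add_le _ _) ?_
        rw [abs_neg, abs_neg]
    _ ≤ B ^ r * (M * Real.exp (-B)) + B ^ r * (M * Real.exp (-B)) := by
        rw [abs_mul, abs_mul, abs_pow, abs_pow]
        exact add_le_add
          (mul_le_mul hBj.1 e1 (abs_nonneg _) (pow_nonneg hBpos.le r))
          (mul_le_mul hBj.2 e2 (abs_nonneg _) (pow_nonneg hBpos.le r))
    _ = 2 * M * B ^ r * Real.exp (-B) := by ring
end

section
/- Let 𝒵 be a standard Borel space, P_Z a probability measure on 𝒵, σ₀ > 0, and (ν_z)_{z ∈ 𝒵} a Markov kernel from 𝒵 to ℝ such that for every z ∈ 𝒵 and every μ ∈ ℝ, the Kullback–Leibler divergence KL( ν_z ‖ ν_z(· − μ) ) ≤ μ² / (2σ₀²), where ν_z(· − μ) denotes the pushforward of ν_z under t ↦ t + μ. For a bounded measurable function h : 𝒵 → ℝ, let Q_h be the n-fold product of the law on 𝒵 × ℝ of the pair (z̃, h(z̃) + η), where z̃ ~ P_Z and the conditional law of η given z̃ = z is ν_z. Then KL( Q_0 ‖ Q_h ) ≤ n · ∫ h² dP_Z / (2σ₀²). -/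
open MeasureTheory ProbabilityTheory
open scoped ENNReal ProbabilityTheory

open Classical in
/-- The Kullback–Leibler divergence `KL(μ ‖ ν) = ∫ log (dμ/dν) dμ`, valued in `EReal`,
set to `⊤` unless `μ ≪ ν` and the log-likelihood ratio is `μ`-integrable. -/
noncomputable def klDiv {α : Type*} [MeasurableSpace α] (μ ν : Measure α) : EReal :=
  if μ ≪ ν ∧ Integrable (llr μ ν) μ then ((∫ x, llr μ ν x ∂μ : ℝ) : EReal) else ⊤

section aux

variable {X : Type*} [MeasurableSpace X]

/-- lintegral of a product of coordinate functions over a finite product measure. -/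
lemma lintegral_pi_prod' {n : ℕ} (μ : Measure X) [SigmaFinite μ]
    (f : Fin n → X → ℝ≥0∞) (hf : ∀ i, Measurable (f i)) :
    ∫⁻ x, ∏ i, f i (x i) ∂(Measure.pi fun _ : Fin n => μ) = ∏ i, ∫⁻ x, f i x ∂μ := by
  induction n with
  | zero => simp [lintegral_const, Measure.pi_of_empty]
  | succ n ih =>
    have mp := (measurePreserving_piFinSuccAbove (fun _ : Fin (n + 1) => μ) 0).symm
    have hF : Measurable fun x : Fin (n + 1) → X => ∏ i, f i (x i) :=
      Finset.measurable_prod _ fun i _ => (hf i).comp (measurable_pi_apply i)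
    rw [← mp.lintegral_comp hF]
    have : ∀ y : X × (Fin n → X),
        (∏ i, f i (((MeasurableEquiv.piFinSuccAbove (fun _ => X) 0).symm y) i))
          = f 0 y.1 * ∏ i : Fin n, f i.succ (y.2 i) := by
      rintro ⟨a, x⟩
      rw [Fin.prod_univ_succ]
      simp [MeasurableEquiv.piFinSuccAbove_symm_apply, Fin.insertNthEquiv,
        Fin.insertNth_zero, Fin.zero_succAbove]
    simp_rw [this]
    rw [lintegral_prod_mul (f := f 0) (g := fun x : Fin n → X => ∏ i : Fin n, f i.succ (x i))
      (hf 0).aemeasurable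
      (Finset.measurable_prod _ fun i _ => (hf i.succ).comp (measurable_pi_apply i)).aemeasurable,
      ih (fun i => f i.succ) (fun i => hf i.succ), Fin.prod_univ_succ]

end aux

section aux2

variable {X : Type*} [MeasurableSpace X]

lemma pi_withDensity' {n : ℕ} (Q P : Measure X) [SigmaFinite Q] [SigmaFinite P]
    {W : X → ℝ≥0∞} (hW : Measurable W) (hQW : Q.withDensity W = P) :
    (Measure.pi fun _ : Fin n => Q).withDensity (fun x => ∏ i, W (x i))
      = Measure.pi fun _ : Fin n => P := by
  refine (Measure.pi_eq fun s hs => ?_).symm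
  rw [withDensity_apply _ (MeasurableSet.univ_pi hs)]
  have hind : ∀ x : Fin n → X,
      (Set.univ.pi s).indicator (fun x => ∏ i, W (x i)) x
        = ∏ i, (s i).indicator W (x i) := by
    intro x
    by_cases hx : x ∈ Set.univ.pi s
    · rw [Set.indicator_of_mem hx]
      exact Finset.prod_congr rfl fun i _ =>
        (Set.indicator_of_mem (hx i (Set.mem_univ i)) W).symm
    · rw [Set.indicator_of_notMem hx]
      simp only [Set.mem_pi, Set.mem_univ, forall_true_left, not_forall] at hx
      obtain ⟨i, hi⟩ := hx
      exact (Finset.prod_eq_zero (Finset.mem_univ i) (Set.indicator_of_notMem hi W)).symm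
  rw [← lintegral_indicator (MeasurableSet.univ_pi hs)]
  simp_rw [hind]
  rw [lintegral_pi_prod' Q _ (fun i => hW.indicator (hs i))]
  refine Finset.prod_congr rfl fun i _ => ?_
  rw [lintegral_indicator (hs i), ← withDensity_apply _ (hs i), hQW]

end aux2

section aux3

variable {X : Type*} [MeasurableSpace X]

lemma pi_map_eval' {n : ℕ} (P : Measure X) [IsProbabilityMeasure P] (i : Fin n) :
    MeasurePreserving (Function.eval i) (Measure.pi fun _ : Fin n => P) P := by
  refine ⟨measurable_pi_apply i, ?_⟩
  ext s hs
  rw [Measure.map_apply (measurable_pi_apply i) hs, Set.eval_preimage,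
    Measure.pi_pi]
  rw [Finset.prod_eq_single i (fun j _ hj => by simp [Function.update_of_ne hj])
    (fun hmem => absurd (Finset.mem_univ i) hmem)]
  simp

/-- For probability measures `P ≪ Q`, the integral of `|llr P Q|` is at most
`∫ llr P Q ∂P + 2`. -/
lemma abs_llr_integral_le' (P Q : Measure X) [IsProbabilityMeasure P] [IsProbabilityMeasure Q]
    (hPQ : P ≪ Q) (hint : Integrable (llr P Q) P) :
    ∫ x, |llr P Q x| ∂P ≤ ∫ x, llr P Q x ∂P + 2 := by
  have hneg : Integrable (fun x => max (-llr P Q x) 0) P := hint.neg.pos_part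
  have hneg1 : ∫ x, max (-llr P Q x) 0 ∂P ≤ 1 := by
    have hmeas : Measurable fun x => ENNReal.ofReal (max (-llr P Q x) 0) :=
      ((measurable_llr P Q).neg.max measurable_const).ennreal_ofReal
    have key : ∫⁻ x, ENNReal.ofReal (max (-llr P Q x) 0) ∂P ≤ 1 := by
      rw [← lintegral_rnDeriv_mul hPQ hmeas.aemeasurable]
      calc ∫⁻ x, (P.rnDeriv Q x) * ENNReal.ofReal (max (-llr P Q x) 0) ∂Q
          ≤ ∫⁻ _, 1 ∂Q := by
            refine lintegral_mono_ae ?_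
            filter_upwards [Measure.rnDeriv_lt_top P Q] with x hx
            rcases eq_or_ne (P.rnDeriv Q x) 0 with h0 | h0
            · simp [h0]
            · have ht : (P.rnDeriv Q x).toReal > 0 := ENNReal.toReal_pos h0 hx.ne
              have : P.rnDeriv Q x = ENNReal.ofReal (P.rnDeriv Q x).toReal :=
                (ENNReal.ofReal_toReal hx.ne).symm
              rw [this, ← ENNReal.ofReal_mul ht.le]
              refine ENNReal.ofReal_le_one.mpr ?_
              set t := (P.rnDeriv Q x).toReal with htdef
              rcases le_or_gt 1 t with h1 | h1
              · have : -llr P Q x ≤ 0 := by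
                  simp only [llr, neg_nonpos, ← htdef]
                  exact Real.log_nonneg h1
                rw [max_eq_right this]
                simp
              · have hlog : -llr P Q x ≤ t⁻¹ - 1 := by
                  have h' : Real.log t⁻¹ ≤ t⁻¹ - 1 :=
                    Real.log_le_sub_one_of_pos (by positivity)
                  rw [Real.log_inv] at h'
                  simpa [llr, ← htdef] using h'
                calc t * max (-llr P Q x) 0 ≤ t * max (t⁻¹ - 1) 0 := by
                      refine mul_le_mul_of_nonneg_left (max_le_max hlog le_rfl) ht.le
                  _ ≤ 1 := by
                      rcases le_or_gt (t⁻¹ - 1) 0 with h2 | h2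
                      · rw [max_eq_right h2]; simp
                      · rw [max_eq_left h2.le]
                        have ht' : t * (t⁻¹ - 1) = 1 - t := by field_simp
                        rw [ht']; linarith
        _ = 1 := by simp
    rw [integral_eq_lintegral_of_nonneg_ae (f := fun x => max (-llr P Q x) 0)
      (Filter.Eventually.of_forall fun x => le_max_right _ _)
      hneg.aestronglyMeasurable]
    calc (∫⁻ x, ENNReal.ofReal (max (-llr P Q x) 0) ∂P).toReal
        ≤ (1 : ℝ≥0∞).toReal := ENNReal.toReal_mono (by simp) key
      _ = 1 := by simp
  have habs : ∀ x, |llr P Q x| = llr P Q x + 2 * max (-llr P Q x) 0 := by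
    intro x
    rcases le_or_gt 0 (llr P Q x) with h0 | h0
    · rw [abs_of_nonneg h0, max_eq_right (by linarith)]; ring
    · rw [abs_of_neg h0, max_eq_left (by linarith)]; ring
  calc ∫ x, |llr P Q x| ∂P = ∫ x, (llr P Q x + 2 * max (-llr P Q x) 0) ∂P := by
        simp_rw [habs]
    _ = ∫ x, llr P Q x ∂P + 2 * ∫ x, max (-llr P Q x) 0 ∂P := by
        rw [integral_add hint (hneg.const_mul 2), integral_const_mul]
    _ ≤ ∫ x, llr P Q x ∂P + 2 := by linarith

lemma klDiv_le_real {μ ν : Measure X} {r : ℝ} (hle : klDiv μ ν ≤ (r : EReal)) :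
    μ ≪ ν ∧ Integrable (llr μ ν) μ ∧ ∫ x, llr μ ν x ∂μ ≤ r := by
  rw [klDiv] at hle
  split_ifs at hle with hc
  · exact ⟨hc.1, hc.2, by exact_mod_cast hle⟩
  · exact absurd hle (by simp)

end aux3

section aux4

variable {X : Type*} [MeasurableSpace X]

lemma pi_llr' {n : ℕ} (P Q : Measure X) [IsProbabilityMeasure P] [IsProbabilityMeasure Q]
    (hPQ : P ≪ Q) (hint : Integrable (llr P Q) P) :
    (Measure.pi fun _ : Fin n => P) ≪ (Measure.pi fun _ : Fin n => Q)
    ∧ Integrable (llr (Measure.pi fun _ : Fin n => P) (Measure.pi fun _ : Fin n => Q))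
        (Measure.pi fun _ : Fin n => P)
    ∧ ∫ x, llr (Measure.pi fun _ : Fin n => P) (Measure.pi fun _ : Fin n => Q) x
        ∂(Measure.pi fun _ : Fin n => P) = n * ∫ x, llr P Q x ∂P := by
  set W := P.rnDeriv Q with hWdef
  have hW : Measurable W := Measure.measurable_rnDeriv P Q
  have hQW : Q.withDensity W = P := Measure.withDensity_rnDeriv_eq P Q hPQ
  set piP := Measure.pi fun _ : Fin n => P with hpiP
  set piQ := Measure.pi fun _ : Fin n => Q with hpiQ
  have hpiWD : piQ.withDensity (fun x => ∏ i, W (x i)) = piP := pi_withDensity' Q P hW hQW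
  have hACpi : piP ≪ piQ := hpiWD ▸ withDensity_absolutelyContinuous _ _
  have hg : Measurable fun x : Fin n → X => ∏ i, W (x i) :=
    Finset.measurable_prod _ fun i _ => hW.comp (measurable_pi_apply i)
  have hrn : (fun x => ∏ i, W (x i)) =ᵐ[piQ] piP.rnDeriv piQ := by
    conv_rhs => rw [← hpiWD]
    exact (Measure.rnDeriv_withDensity piQ hg).symm
  have hco : ∀ᵐ x ∂piP, ∀ i, 0 < W (x i) ∧ W (x i) < ∞ := by
    rw [ae_all_iff]
    intro i
    have h1 : ∀ᵐ y ∂P, 0 < W y ∧ W y < ∞ :=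
      (Measure.rnDeriv_pos hPQ).and (hPQ.ae_le (Measure.rnDeriv_lt_top P Q))
    have hmap := (pi_map_eval' P i).map_eq
    exact ae_of_ae_map (measurable_pi_apply i).aemeasurable (hmap ▸ h1 :)
  -- a.e. identity for llr of product
  have hllr : llr piP piQ =ᵐ[piP] fun x => ∑ i, llr P Q (x i) := by
    have h1 : llr piP piQ =ᵐ[piP] fun x => Real.log (∏ i, W (x i)).toReal := by
      filter_upwards [hACpi.ae_le hrn.symm] with x hx
      rw [llr_def]
      simp only [← hx]
    refine h1.trans ?_
    filter_upwards [hco] with x hx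
    have hne : ∀ i ∈ Finset.univ, W (x i) ≠ ∞ := fun i _ => (hx i).2.ne
    rw [ENNReal.toReal_prod]
    rw [Real.log_prod (fun i _ => (ENNReal.toReal_pos (hx i).1.ne' (hx i).2.ne).ne')]
    exact Finset.sum_congr rfl fun i _ => by rw [llr_def]
  have hinti : ∀ i : Fin n, Integrable (fun x : Fin n → X => llr P Q (x i)) piP := fun i =>
    (pi_map_eval' P i).integrable_comp (measurable_llr P Q).aestronglyMeasurable |>.mpr hint
  have hintsum : Integrable (fun x : Fin n → X => ∑ i, llr P Q (x i)) piP :=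
    integrable_finset_sum _ fun i _ => hinti i
  refine ⟨hACpi, hintsum.congr hllr.symm, ?_⟩
  rw [integral_congr_ae hllr, integral_finset_sum _ fun i _ => hinti i]
  have : ∀ i : Fin n, ∫ x, llr P Q (x i) ∂piP = ∫ y, llr P Q y ∂P := by
    intro i
    have h2 : ∫ y, llr P Q y ∂(piP.map (Function.eval i))
        = ∫ x, llr P Q (Function.eval i x) ∂piP :=
      integral_map (measurable_pi_apply i).aemeasurable
        (measurable_llr P Q).aestronglyMeasurable
    rw [(pi_map_eval' P i).map_eq] at h2
    exact h2.symm
  simp [this]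

end aux4

section single

variable {𝒵 : Type*} [MeasurableSpace 𝒵]

/-- The kernel `z ↦ (ν z).map (· + h z)`. -/
noncomputable def shiftK (ν : Kernel 𝒵 ℝ) [IsSFiniteKernel ν] (h : 𝒵 → ℝ) (hm : Measurable h) :
    Kernel 𝒵 ℝ where
  toFun := fun z => (ν z).map (fun t => t + h z)
  measurable' := by
    refine Measure.measurable_of_measurable_coe _ fun s hs => ?_
    have : ∀ z, (ν z).map (fun t => t + h z) s = ν z (Prod.mk z ⁻¹' {p : 𝒵 × ℝ | p.2 + h p.1 ∈ s}) := by
      intro z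
      rw [Measure.map_apply (measurable_add_const (h z)) hs]
      rfl
    simp_rw [this]
    exact Kernel.measurable_kernel_prodMk_left
      ((measurable_snd.add (hm.comp measurable_fst)) hs)

lemma shiftK_apply (ν : Kernel 𝒵 ℝ) [IsSFiniteKernel ν] (h : 𝒵 → ℝ) (hm : Measurable h) (z : 𝒵) :
    shiftK ν h hm z = (ν z).map (fun t => t + h z) := rfl

instance (ν : Kernel 𝒵 ℝ) [IsMarkovKernel ν] [IsSFiniteKernel ν] (h : 𝒵 → ℝ) (hm : Measurable h) :
    IsMarkovKernel (shiftK ν h hm) := by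
  refine ⟨fun z => ?_⟩
  rw [shiftK_apply]
  exact Measure.isProbabilityMeasure_map (measurable_add_const (h z)).aemeasurable

end single

section single2

variable {𝒵 : Type*} [MeasurableSpace 𝒵]

lemma single' (PZ : Measure 𝒵) [IsProbabilityMeasure PZ] {σ₀ : ℝ} (hσ : 0 < σ₀)
    (ν : Kernel 𝒵 ℝ) [IsMarkovKernel ν]
    (hshift : ∀ (z : 𝒵) (μr : ℝ),
      klDiv (ν z) ((ν z).map fun t => t + μr) ≤ ((μr ^ 2 / (2 * σ₀ ^ 2) : ℝ) : EReal))
    (h : 𝒵 → ℝ) (hm : Measurable h) {C : ℝ} (hb : ∀ z, |h z| ≤ C) :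
    (PZ ⊗ₘ ν) ≪ ((PZ ⊗ₘ ν).map fun p : 𝒵 × ℝ => (p.1, h p.1 + p.2)) ∧
    Integrable (llr (PZ ⊗ₘ ν) ((PZ ⊗ₘ ν).map fun p : 𝒵 × ℝ => (p.1, h p.1 + p.2))) (PZ ⊗ₘ ν) ∧
    ∫ p, llr (PZ ⊗ₘ ν) ((PZ ⊗ₘ ν).map fun p : 𝒵 × ℝ => (p.1, h p.1 + p.2)) p ∂(PZ ⊗ₘ ν)
      ≤ (∫ z, h z ^ 2 ∂PZ) / (2 * σ₀ ^ 2) := by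
  set ν' := shiftK ν h hm with hν'def
  -- per-z facts
  have hper : ∀ z : 𝒵, (ν z ≪ ν' z ∧ Integrable (llr (ν z) (ν' z)) (ν z)) ∧
      ∫ t, llr (ν z) (ν' z) t ∂(ν z) ≤ h z ^ 2 / (2 * σ₀ ^ 2) := by
    intro z
    have := klDiv_le_real (hshift z (h z))
    rw [← shiftK_apply ν h hm] at this
    exact ⟨⟨this.1, this.2.1⟩, this.2.2⟩
  have hACz : ∀ z, ν z ≪ ν' z := fun z => (hper z).1.1
  -- identify the pushforward with the compProd by the shifted kernel
  have hf : Measurable fun p : 𝒵 × ℝ => (p.1, h p.1 + p.2) :=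
    measurable_fst.prodMk ((hm.comp measurable_fst).add measurable_snd)
  have hQh : ((PZ ⊗ₘ ν).map fun p : 𝒵 × ℝ => (p.1, h p.1 + p.2)) = PZ ⊗ₘ ν' := by
    ext s hs
    rw [Measure.map_apply hf hs, Measure.compProd_apply (hf hs), Measure.compProd_apply hs]
    refine lintegral_congr fun z => ?_
    have hsets : Prod.mk z ⁻¹' ((fun p : 𝒵 × ℝ => (p.1, h p.1 + p.2)) ⁻¹' s)
        = (fun t => t + h z) ⁻¹' (Prod.mk z ⁻¹' s) := by
      ext t; simp [add_comm]
    rw [hsets, ← Measure.map_apply (measurable_add_const (h z)) (measurable_prodMk_left hs),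
      ← shiftK_apply ν h hm]
  rw [hQh]
  -- absolute continuity
  have hAC : (PZ ⊗ₘ ν) ≪ (PZ ⊗ₘ ν') := by
    refine Measure.AbsolutelyContinuous.mk fun s hs h0 => ?_
    rw [Measure.compProd_apply hs] at h0 ⊢
    rw [lintegral_eq_zero_iff (Kernel.measurable_kernel_prodMk_left hs)] at h0 ⊢
    filter_upwards [h0] with z hz
    exact hACz z hz
  -- density
  set W' : 𝒵 × ℝ → ℝ≥0∞ := fun p => Kernel.rnDeriv ν ν' p.1 p.2 with hW'def
  have hW'meas : Measurable W' := Kernel.measurable_rnDeriv ν ν'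
  have hWD : (PZ ⊗ₘ ν').withDensity W' = PZ ⊗ₘ ν := by
    ext s hs
    rw [withDensity_apply _ hs, ← lintegral_indicator hs,
      Measure.lintegral_compProd (hW'meas.indicator hs), Measure.compProd_apply hs]
    refine lintegral_congr fun z => ?_
    have hind : ∀ t, s.indicator W' (z, t)
        = (Prod.mk z ⁻¹' s).indicator (fun t => W' (z, t)) t := by
      intro t
      by_cases ht : (z, t) ∈ s <;> simp [Set.indicator, ht, Set.mem_preimage]
    simp_rw [hind]
    rw [lintegral_indicator (measurable_prodMk_left hs)]
    have h1 : (ν' z).withDensity (Kernel.rnDeriv ν ν' z) = ν z := by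
      rw [withDensity_congr_ae (Kernel.rnDeriv_eq_rnDeriv_measure (κ := ν) (η := ν') (a := z))]
      exact Measure.withDensity_rnDeriv_eq _ _ (hACz z)
    rw [← h1, withDensity_apply _ (measurable_prodMk_left hs)]
  have hrn : (PZ ⊗ₘ ν).rnDeriv (PZ ⊗ₘ ν') =ᵐ[PZ ⊗ₘ ν'] W' := by
    rw [← hWD]
    exact Measure.rnDeriv_withDensity _ hW'meas
  set F : 𝒵 × ℝ → ℝ := fun p => Real.log (W' p).toReal with hFdef
  have hFmeas : Measurable F := (hW'meas.ennreal_toReal).log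
  have hF : llr (PZ ⊗ₘ ν) (PZ ⊗ₘ ν') =ᵐ[PZ ⊗ₘ ν] F := by
    filter_upwards [hAC.ae_le hrn] with p hp
    rw [llr_def]
    simp only [hp, hFdef]
  -- sections
  have hsec : ∀ z, (fun t => F (z, t)) =ᵐ[ν z] llr (ν z) (ν' z) := by
    intro z
    have h2 : Kernel.rnDeriv ν ν' z =ᵐ[ν z] (ν z).rnDeriv (ν' z) :=
      (hACz z).ae_le (Kernel.rnDeriv_eq_rnDeriv_measure (κ := ν) (η := ν') (a := z))
    filter_upwards [h2] with t ht
    rw [llr_def]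
    simp only [hFdef, hW'def, ht]
  have hIntsec : ∀ z, Integrable (fun t => F (z, t)) (ν z) := fun z =>
    ((hper z).1.2).congr (hsec z).symm
  have habs : ∀ z, ∫ t, |llr (ν z) (ν' z) t| ∂(ν z) ≤ h z ^ 2 / (2 * σ₀ ^ 2) + 2 := by
    intro z
    refine (abs_llr_integral_le' (ν z) (ν' z) (hACz z) (hper z).1.2).trans ?_
    linarith [(hper z).2]
  have hsq : ∀ z, h z ^ 2 ≤ C ^ 2 := by
    intro z
    have h1 := hb z
    have h2 := abs_nonneg (h z)
    nlinarith [sq_abs (h z)]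
  set B : ℝ := C ^ 2 / (2 * σ₀ ^ 2) + 2 with hBdef
  have hσ2 : (0:ℝ) < 2 * σ₀ ^ 2 := by positivity
  have habsB : ∀ z, ∫ t, |llr (ν z) (ν' z) t| ∂(ν z) ≤ B := by
    intro z
    refine (habs z).trans ?_
    have h3 : h z ^ 2 / (2 * σ₀ ^ 2) ≤ C ^ 2 / (2 * σ₀ ^ 2) := by
      gcongr ?_ / _
      exact hsq z
    linarith
  have hφmeas : StronglyMeasurable fun z => ∫ t, ‖F (z, t)‖ ∂(ν z) :=
    (hFmeas.norm.stronglyMeasurable).integral_kernel_prod_right'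
  have hφint : Integrable (fun z => ∫ t, ‖F (z, t)‖ ∂(ν z)) PZ := by
    refine Integrable.mono' (integrable_const B) hφmeas.aestronglyMeasurable ?_
    refine ae_of_all _ fun z => ?_
    rw [Real.norm_eq_abs, abs_of_nonneg (integral_nonneg fun t => norm_nonneg _)]
    calc ∫ t, ‖F (z, t)‖ ∂(ν z) = ∫ t, |llr (ν z) (ν' z) t| ∂(ν z) := by
          refine integral_congr_ae ?_
          filter_upwards [hsec z] with t ht
          rw [Real.norm_eq_abs, ht]
      _ ≤ B := habsB z
  have hIntF : Integrable F (PZ ⊗ₘ ν) := by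
    rw [Measure.integrable_compProd_iff hFmeas.aestronglyMeasurable]
    exact ⟨ae_of_all _ hIntsec, hφint⟩
  have hIntllr : Integrable (llr (PZ ⊗ₘ ν) (PZ ⊗ₘ ν')) (PZ ⊗ₘ ν) := hIntF.congr hF.symm
  refine ⟨hAC, hIntllr, ?_⟩
  rw [integral_congr_ae hF, Measure.integral_compProd hIntF]
  have hinner_meas : StronglyMeasurable fun z => ∫ t, F (z, t) ∂(ν z) :=
    hFmeas.stronglyMeasurable.integral_kernel_prod_right'
  have hinner_int : Integrable (fun z => ∫ t, F (z, t) ∂(ν z)) PZ := by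
    refine Integrable.mono' hφint hinner_meas.aestronglyMeasurable ?_
    exact ae_of_all _ fun z => norm_integral_le_integral_norm _
  have hrhs_int : Integrable (fun z => h z ^ 2 / (2 * σ₀ ^ 2)) PZ := by
    refine Integrable.mono' (integrable_const (C ^ 2 / (2 * σ₀ ^ 2)))
      ((hm.pow_const 2).div_const _).aestronglyMeasurable (ae_of_all _ fun z => ?_)
    rw [Real.norm_eq_abs, abs_of_nonneg (by positivity)]
    gcongr ?_ / _
    exact hsq z
  calc ∫ z, ∫ t, F (z, t) ∂(ν z) ∂PZ ≤ ∫ z, h z ^ 2 / (2 * σ₀ ^ 2) ∂PZ := by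
        refine integral_mono_ae hinner_int hrhs_int (ae_of_all _ fun z => ?_)
        calc ∫ t, F (z, t) ∂(ν z) = ∫ t, llr (ν z) (ν' z) t ∂(ν z) :=
              integral_congr_ae (hsec z)
          _ ≤ h z ^ 2 / (2 * σ₀ ^ 2) := (hper z).2
    _ = (∫ z, h z ^ 2 ∂PZ) / (2 * σ₀ ^ 2) := by rw [integral_div]

end single2

/-- chain rule and tensorization bound for the Kullback–Leibler divergence in
the indirect regression model `ỹ = h(z̃) + η`, where the conditional noise kernel `ν`
satisfies the shift bound `KL(ν_z ‖ ν_z(· − μ)) ≤ μ²/(2σ₀²)`.  Here `Q_0` is the `n`-fold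
product of the law `PZ ⊗ₘ ν` of `(z̃, 0 + η)` and `Q_h` the `n`-fold product of the law of
`(z̃, h(z̃) + η)`, i.e. of the pushforward of `PZ ⊗ₘ ν` under `(z, t) ↦ (z, h z + t)`. -/
theorem stmt13 {𝒵 : Type*} [MeasurableSpace 𝒵] [StandardBorelSpace 𝒵]
    (PZ : Measure 𝒵) [IsProbabilityMeasure PZ] (σ₀ : ℝ) (hσ : 0 < σ₀)
    (ν : Kernel 𝒵 ℝ) [IsMarkovKernel ν]
    (hshift : ∀ (z : 𝒵) (μ : ℝ),
      klDiv (ν z) ((ν z).map fun t => t + μ) ≤ ((μ ^ 2 / (2 * σ₀ ^ 2) : ℝ) : EReal))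
    (n : ℕ) (h : 𝒵 → ℝ) (hm : Measurable h) (hb : ∃ C, ∀ z, |h z| ≤ C)
    [IsProbabilityMeasure ((PZ ⊗ₘ ν).map fun p : 𝒵 × ℝ => (p.1, h p.1 + p.2))] :
    klDiv (Measure.pi fun _ : Fin n => PZ ⊗ₘ ν)
        (Measure.pi fun _ : Fin n => (PZ ⊗ₘ ν).map fun p : 𝒵 × ℝ => (p.1, h p.1 + p.2))
      ≤ (((n : ℝ) * (∫ z, h z ^ 2 ∂PZ) / (2 * σ₀ ^ 2) : ℝ) : EReal) := by
  obtain ⟨C, hb⟩ := hb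
  obtain ⟨hAC, hInt, hKL⟩ := single' PZ hσ ν hshift h hm hb
  obtain ⟨hACpi, hIntpi, hEq⟩ := pi_llr' (n := n) (PZ ⊗ₘ ν)
    ((PZ ⊗ₘ ν).map fun p : 𝒵 × ℝ => (p.1, h p.1 + p.2)) hAC hInt
  rw [klDiv, if_pos ⟨hACpi, hIntpi⟩, hEq]
  refine EReal.coe_le_coe_iff.mpr ?_
  calc (n : ℝ) * ∫ p, llr (PZ ⊗ₘ ν)
        ((PZ ⊗ₘ ν).map fun p : 𝒵 × ℝ => (p.1, h p.1 + p.2)) p ∂(PZ ⊗ₘ ν)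
      ≤ (n : ℝ) * ((∫ z, h z ^ 2 ∂PZ) / (2 * σ₀ ^ 2)) :=
        mul_le_mul_of_nonneg_left hKL (Nat.cast_nonneg n)
    _ = (n : ℝ) * (∫ z, h z ^ 2 ∂PZ) / (2 * σ₀ ^ 2) := (mul_div_assoc _ _ _).symm
end
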